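/- Consider the point set in ℝ²: x_1 = (0,0), x_2 = (1,1), x_3 = (m,1) for m > 2, and points x_4,...,x_n contained in an ε-ball around (1,0) for sufficiently small ε > 0. The graph with bidirectional edges {x_2, x_3} and {x_i, x_j} for all i ∈ {1,2}, j ∈ {4,...,n}, together with all edges among x_4,...,x_n, is navigable under Euclidean distance. -/

import Mathlib

/-- A point of the Euclidean plane with the given coordinates. -/
noncomputable def pt (a b : ℝ) : EuclideanSpace ℝ (Fin 2) := WithLp.toLp 2 ![a, b]

/-- Adjacency of the counterexample graph (0-indexed: nodes `0,1,2` are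
`x₁ = (0,0)`, `x₂ = (1,1)`, `x₃ = (m,1)` of the paper, nodes `≥ 3` are the cluster):
bidirectional edge between `1` and `2`, bidirectional edges between `{0,1}` and the
cluster, and all edges among cluster nodes. -/
def exAdj {n : ℕ} (i j : Fin n) : Prop :=
  ((i : ℕ) = 1 ∧ (j : ℕ) = 2) ∨
  ((i : ℕ) = 2 ∧ (j : ℕ) = 1) ∨
  ((i : ℕ) ≤ 1 ∧ 3 ≤ (j : ℕ)) ∨
  ((j : ℕ) ≤ 1 ∧ 3 ≤ (i : ℕ)) ∨
  (3 ≤ (i : ℕ) ∧ 3 ≤ (j : ℕ) ∧ i ≠ j)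

lemma dist_pt (a b c d : ℝ) : dist (pt a b) (pt c d) = Real.sqrt ((a-c)^2 + (b-d)^2) := by
  rw [EuclideanSpace.dist_eq]
  simp [pt, Fin.sum_univ_two, Real.dist_eq, sq_abs]

/-- For `m > 2` and sufficiently small `ε > 0`, the graph described by
`exAdj` on the points `x 0 = (0,0)`, `x 1 = (1,1)`, `x 2 = (m,1)` and points
`x i` (`i ≥ 3`) in an `ε`-ball around `(1,0)` is navigable under Euclidean distance. -/
theorem stmt8 (m : ℝ) (hm : 2 < m) :
    ∃ ε : ℝ, 0 < ε ∧
      ∀ (n : ℕ) (hn : 4 ≤ n) (x : Fin n → EuclideanSpace ℝ (Fin 2)),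
        (∀ i j : Fin n, i ≠ j → x i ≠ x j) →
        x ⟨0, by omega⟩ = pt 0 0 →
        x ⟨1, by omega⟩ = pt 1 1 →
        x ⟨2, by omega⟩ = pt m 1 →
        (∀ i : Fin n, 3 ≤ (i : ℕ) → dist (x i) (pt 1 0) ≤ ε) →
        ∀ i j : Fin n, i ≠ j →
          ∃ z : Fin n, exAdj i z ∧ dist (x z) (x j) < dist (x i) (x j) := by
  set s := Real.sqrt ((m-1)^2+1) with hs
  set ε := min (1/5 : ℝ) (1/(2*m)) with hε
  have hm0 : (0:ℝ) < m := by linarith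
  have hε0 : 0 < ε := by
    apply lt_min (by norm_num); positivity
  have hε5 : ε ≤ 1/5 := min_le_left _ _
  have hεm : ε * (2*m) ≤ 1 := by
    have := min_le_right (1/5 : ℝ) (1/(2*m))
    calc ε * (2*m) ≤ (1/(2*m)) * (2*m) := by
          apply mul_le_mul_of_nonneg_right this (by positivity)
      _ = 1 := by field_simp
  have hs0 : 0 ≤ s := Real.sqrt_nonneg _
  have hs2 : s^2 = (m-1)^2+1 := Real.sq_sqrt (by positivity)
  have hsm : s ≤ m := by
    rw [hs]
    calc Real.sqrt ((m-1)^2+1) ≤ Real.sqrt (m^2) :=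
          Real.sqrt_le_sqrt (by nlinarith)
      _ = m := Real.sqrt_sq (by linarith)
  have key1 : 1 + ε < Real.sqrt 2 := by
    rw [Real.lt_sqrt (by linarith)]; nlinarith
  have key2 : ε + s < Real.sqrt (m^2+1) := by
    rw [Real.lt_sqrt (by linarith)]; nlinarith
  have key3 : Real.sqrt 2 < Real.sqrt (m^2+1) :=
    Real.sqrt_lt_sqrt (by norm_num) (by nlinarith)
  have key4 : 1 + 2*ε < s := by
    rw [hs, Real.lt_sqrt (by linarith)]; nlinarith
  have key5 : (m-1) + ε < s := by
    rw [hs, Real.lt_sqrt (by linarith)]; nlinarith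
  -- distances between the fixed points
  have d01 : dist (pt 0 0) (pt 1 1) = Real.sqrt 2 := by rw [dist_pt]; norm_num
  have d02 : dist (pt 0 0) (pt m 1) = Real.sqrt (m^2+1) := by
    rw [dist_pt]; ring_nf
  have d12 : dist (pt 1 1) (pt m 1) = m - 1 := by
    rw [dist_pt, show (1-m)^2 + (1-1:ℝ)^2 = (m-1)^2 by ring, Real.sqrt_sq (by linarith)]
  have dP1 : dist (pt 1 0) (pt 1 1) = 1 := by
    rw [dist_pt]; norm_num
  have dP0 : dist (pt 1 0) (pt 0 0) = 1 := by
    rw [dist_pt]; norm_num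
  have dP2 : dist (pt 1 0) (pt m 1) = s := by
    rw [dist_pt, hs]; ring_nf
  refine ⟨ε, hε0, ?_⟩
  intro n hn x hd h0 h1 h2 hc i j hij
  have a0 : Fin n := ⟨0, by omega⟩
  set z1 : Fin n := ⟨1, by omega⟩ with hz1
  set z3 : Fin n := ⟨3, by omega⟩ with hz3
  have hx1 : x z1 = pt 1 1 := h1
  have hx3ε : dist (x z3) (pt 1 0) ≤ ε := hc z3 (by simp [hz3])
  have hpos : 0 < dist (x i) (x j) := dist_pos.mpr (hd i j hij)
  have hival : (i:ℕ) = 0 ∨ (i:ℕ) = 1 ∨ (i:ℕ) = 2 ∨ 3 ≤ (i:ℕ) := by omega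
  have hjval : (j:ℕ) = 0 ∨ (j:ℕ) = 1 ∨ (j:ℕ) = 2 ∨ 3 ≤ (j:ℕ) := by omega
  have hne : (i:ℕ) ≠ (j:ℕ) := fun h => hij (Fin.ext h)
  -- rewrite x i, x j for the low-index cases
  rcases hival with hi | hi | hi | hi
  · -- i = 0
    have hxi : x i = pt 0 0 := by rw [show i = ⟨0, by omega⟩ from Fin.ext hi]; exact h0
    rcases hjval with hj | hj | hj | hj
    · omega
    · -- j = 1 : go to cluster node 3
      have hxj : x j = pt 1 1 := by rw [show j = ⟨1, by omega⟩ from Fin.ext hj]; exact h1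
      refine ⟨z3, Or.inr (Or.inr (Or.inl ⟨by omega, by simp [hz3]⟩)), ?_⟩
      rw [hxi, hxj, d01]
      calc dist (x z3) (pt 1 1) ≤ dist (x z3) (pt 1 0) + dist (pt 1 0) (pt 1 1) :=
            dist_triangle _ _ _
        _ ≤ ε + 1 := by rw [dP1]; linarith
        _ < Real.sqrt 2 := by linarith
    · -- j = 2 : go to cluster node 3
      have hxj : x j = pt m 1 := by rw [show j = ⟨2, by omega⟩ from Fin.ext hj]; exact h2
      refine ⟨z3, Or.inr (Or.inr (Or.inl ⟨by omega, by simp [hz3]⟩)), ?_⟩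
      rw [hxi, hxj, d02]
      calc dist (x z3) (pt m 1) ≤ dist (x z3) (pt 1 0) + dist (pt 1 0) (pt m 1) :=
            dist_triangle _ _ _
        _ ≤ ε + s := by rw [dP2]; linarith
        _ < Real.sqrt (m^2+1) := key2
    · -- j cluster : go to j itself
      exact ⟨j, Or.inr (Or.inr (Or.inl ⟨by omega, hj⟩)), by simpa using hpos⟩
  · -- i = 1
    have hxi : x i = pt 1 1 := by rw [show i = ⟨1, by omega⟩ from Fin.ext hi]; exact h1
    rcases hjval with hj | hj | hj | hj
    · -- j = 0 : go to cluster node 3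
      have hxj : x j = pt 0 0 := by rw [show j = ⟨0, by omega⟩ from Fin.ext hj]; exact h0
      refine ⟨z3, Or.inr (Or.inr (Or.inl ⟨by omega, by simp [hz3]⟩)), ?_⟩
      rw [hxi, hxj, dist_comm (pt 1 1) (pt 0 0), d01]
      calc dist (x z3) (pt 0 0) ≤ dist (x z3) (pt 1 0) + dist (pt 1 0) (pt 0 0) :=
            dist_triangle _ _ _
        _ ≤ ε + 1 := by rw [dP0]; linarith
        _ < Real.sqrt 2 := by linarith
    · omega
    · -- j = 2 : go to j itself
      exact ⟨j, Or.inl ⟨hi, hj⟩, by simpa using hpos⟩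
    · -- j cluster : go to j itself
      exact ⟨j, Or.inr (Or.inr (Or.inl ⟨by omega, hj⟩)), by simpa using hpos⟩
  · -- i = 2 : only neighbor is node 1
    have hxi : x i = pt m 1 := by rw [show i = ⟨2, by omega⟩ from Fin.ext hi]; exact h2
    refine ⟨z1, Or.inr (Or.inl ⟨hi, by simp [hz1]⟩), ?_⟩
    rw [hx1, hxi]
    rcases hjval with hj | hj | hj | hj
    · -- j = 0
      have hxj : x j = pt 0 0 := by rw [show j = ⟨0, by omega⟩ from Fin.ext hj]; exact h0
      rw [hxj, dist_comm (pt 1 1) (pt 0 0), d01, dist_comm (pt m 1) (pt 0 0), d02]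
      exact key3
    · -- j = 1
      have hxj : x j = pt 1 1 := by rw [show j = ⟨1, by omega⟩ from Fin.ext hj]; exact h1
      rw [hxj, dist_self, dist_comm (pt m 1) (pt 1 1), d12]
      linarith
    · omega
    · -- j cluster
      have hjε : dist (x j) (pt 1 0) ≤ ε := hc j hj
      have hlow : s - ε ≤ dist (pt m 1) (x j) := by
        have h1' : dist (pt 1 0) (pt m 1) ≤ dist (pt 1 0) (x j) + dist (x j) (pt m 1) :=
          dist_triangle _ _ _
        rw [dP2] at h1'
        have h2' : dist (x j) (pt 1 0) ≤ ε := hc j hj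
        rw [dist_comm (x j) (pt 1 0)] at h2'
        rw [dist_comm (pt m 1) (x j)]
        linarith
      have hup : dist (pt 1 1) (x j) ≤ 1 + ε := by
        calc dist (pt 1 1) (x j) ≤ dist (pt 1 1) (pt 1 0) + dist (pt 1 0) (x j) :=
              dist_triangle _ _ _
          _ ≤ 1 + ε := by
              rw [dist_comm (pt 1 1) (pt 1 0), dP1, dist_comm (pt 1 0) (x j)]
              linarith
      linarith
  · -- i cluster
    rcases hjval with hj | hj | hj | hj
    · -- j = 0 : go to j
      exact ⟨j, Or.inr (Or.inr (Or.inr (Or.inl ⟨by omega, hi⟩))), by simpa using hpos⟩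
    · -- j = 1 : go to j
      exact ⟨j, Or.inr (Or.inr (Or.inr (Or.inl ⟨by omega, hi⟩))), by simpa using hpos⟩
    · -- j = 2 : go to node 1
      have hxj : x j = pt m 1 := by rw [show j = ⟨2, by omega⟩ from Fin.ext hj]; exact h2
      refine ⟨z1, Or.inr (Or.inr (Or.inr (Or.inl ⟨by simp [hz1], hi⟩))), ?_⟩
      rw [hx1, hxj, d12]
      have hiε : dist (x i) (pt 1 0) ≤ ε := hc i hi
      have hlow : s - ε ≤ dist (x i) (pt m 1) := by
        have h1' : dist (pt 1 0) (pt m 1) ≤ dist (pt 1 0) (x i) + dist (x i) (pt m 1) :=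
          dist_triangle _ _ _
        rw [dP2] at h1'
        rw [dist_comm (x i) (pt 1 0)] at hiε
        linarith
      linarith
    · -- j cluster : go to j
      exact ⟨j, Or.inr (Or.inr (Or.inr (Or.inr ⟨hi, hj, hij⟩))), by simpa using hpos⟩
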